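/- Assume that for each i ∈ I and every v ∈ ℝ^d, ‖∇l_{Sᵢ}(v) − ∇l_{Tᵢ}(v)‖ ≤ bᵢ, and set b = ∫_I bᵢ dμ(i). Define C_b = C_𝓛 = (αρ + (ρ/L)(1 + αL)^{N−1})(1 + αL)^{2N}, and the meta objective gradient ∇𝓛(w) = ∫_I Gᵢ(w) dμ(i). Then for every w, u ∈ ℝ^d, ‖∇𝓛(w) − ∇𝓛(u)‖ ≤ ((1 + αL)^{2N} L + C_b b + C_𝓛 ∫_I ‖∇l_{Tᵢ}(w)‖ dμ(i)) ‖w − u‖. -/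

import Mathlib

open MeasureTheory
noncomputable def innerPath {d : ℕ} (α : ℝ) (l : EuclideanSpace ℝ (Fin d) → ℝ) :
    ℕ → EuclideanSpace ℝ (Fin d) → EuclideanSpace ℝ (Fin d)
  | 0, w => w
  | j + 1, w => innerPath α l j w - α • gradient l (innerPath α l j w)

noncomputable def hessProd {d : ℕ} (α : ℝ) (N : ℕ)
    (lS : EuclideanSpace ℝ (Fin d) → ℝ) (w : EuclideanSpace ℝ (Fin d)) :
    EuclideanSpace ℝ (Fin d) →L[ℝ] EuclideanSpace ℝ (Fin d) :=
  ((List.range N).map fun j =>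
    ContinuousLinearMap.id ℝ (EuclideanSpace ℝ (Fin d)) -
      α • fderiv ℝ (gradient lS) (innerPath α lS j w)).prod

noncomputable def metaGrad {d : ℕ} (α : ℝ) (N : ℕ)
    (lS lT : EuclideanSpace ℝ (Fin d) → ℝ) (w : EuclideanSpace ℝ (Fin d)) :
    EuclideanSpace ℝ (Fin d) :=
  hessProd α N lS w (gradient lT (innerPath α lS N w))

section Helpers
variable {d : ℕ} {α L ρ : ℝ} {lS lT : EuclideanSpace ℝ (Fin d) → ℝ}

lemma hess_norm_le (hL : 0 ≤ L)
    (hgradS : ∀ w u, ‖gradient lS w - gradient lS u‖ ≤ L * ‖w - u‖)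
    (v : EuclideanSpace ℝ (Fin d)) : ‖fderiv ℝ (gradient lS) v‖ ≤ L :=
  norm_fderiv_le_of_lip' ℝ hL (Filter.Eventually.of_forall fun x => hgradS x v)

lemma factor_norm_le (hα : 0 < α) (hL : 0 ≤ L)
    (hgradS : ∀ w u, ‖gradient lS w - gradient lS u‖ ≤ L * ‖w - u‖)
    (v : EuclideanSpace ℝ (Fin d)) :
    ‖ContinuousLinearMap.id ℝ (EuclideanSpace ℝ (Fin d)) -
      α • fderiv ℝ (gradient lS) v‖ ≤ 1 + α * L := by
  refine (norm_sub_le _ _).trans ?_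
  have h1 : ‖α • fderiv ℝ (gradient lS) v‖ ≤ α * L := by
    rw [norm_smul, Real.norm_eq_abs, abs_of_pos hα]
    exact mul_le_mul_of_nonneg_left (hess_norm_le hL hgradS v) hα.le
  have := ContinuousLinearMap.norm_id_le (𝕜 := ℝ) (E := EuclideanSpace ℝ (Fin d))
  linarith

lemma innerPath_lip (hα : 0 < α) (hL : 0 ≤ L)
    (hgradS : ∀ w u, ‖gradient lS w - gradient lS u‖ ≤ L * ‖w - u‖)
    (w u : EuclideanSpace ℝ (Fin d)) :
    ∀ j, ‖innerPath α lS j w - innerPath α lS j u‖ ≤ (1 + α * L) ^ j * ‖w - u‖ := by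
  intro j
  induction j with
  | zero => simp [innerPath]
  | succ j ih =>
    have key : innerPath α lS (j+1) w - innerPath α lS (j+1) u =
        (innerPath α lS j w - innerPath α lS j u) -
          α • (gradient lS (innerPath α lS j w) - gradient lS (innerPath α lS j u)) := by
      simp [innerPath, smul_sub]; abel
    rw [key]
    refine (norm_sub_le _ _).trans ?_
    have h1 : ‖α • (gradient lS (innerPath α lS j w) - gradient lS (innerPath α lS j u))‖
        ≤ α * (L * ‖innerPath α lS j w - innerPath α lS j u‖) := by
      rw [norm_smul, Real.norm_eq_abs, abs_of_pos hα]
      exact mul_le_mul_of_nonneg_left (hgradS _ _) hα.le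
    have h2 := ih
    have hM : (0:ℝ) ≤ 1 + α * L := by positivity
    calc ‖innerPath α lS j w - innerPath α lS j u‖ +
          ‖α • (gradient lS (innerPath α lS j w) - gradient lS (innerPath α lS j u))‖
        ≤ (1 + α * L) * ‖innerPath α lS j w - innerPath α lS j u‖ := by nlinarith
      _ ≤ (1 + α * L) * ((1 + α * L) ^ j * ‖w - u‖) := by nlinarith
      _ = (1 + α * L) ^ (j+1) * ‖w - u‖ := by ring

lemma hessProd_succ (α : ℝ) (N : ℕ) (lS : EuclideanSpace ℝ (Fin d) → ℝ)
    (w : EuclideanSpace ℝ (Fin d)) :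
    hessProd α (N+1) lS w = hessProd α N lS w *
      (ContinuousLinearMap.id ℝ (EuclideanSpace ℝ (Fin d)) -
        α • fderiv ℝ (gradient lS) (innerPath α lS N w)) := by
  unfold hessProd
  rw [List.range_succ, List.map_append, List.prod_append]
  simp

lemma hessProd_norm_le (hα : 0 < α) (hL : 0 ≤ L)
    (hgradS : ∀ w u, ‖gradient lS w - gradient lS u‖ ≤ L * ‖w - u‖)
    (w : EuclideanSpace ℝ (Fin d)) :
    ∀ N, ‖hessProd α N lS w‖ ≤ (1 + α * L) ^ N := by
  intro N
  induction N with
  | zero =>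
    have h : hessProd α 0 lS w = ContinuousLinearMap.id ℝ (EuclideanSpace ℝ (Fin d)) := by
      simp [hessProd, ContinuousLinearMap.one_def]
    rw [h, pow_zero]
    exact ContinuousLinearMap.norm_id_le
  | succ N ih =>
    rw [hessProd_succ]
    refine (norm_mul_le _ _).trans ?_
    have h2 := factor_norm_le hα hL hgradS (innerPath α lS N w)
    have hM : (0:ℝ) ≤ 1 + α * L := by positivity
    calc ‖hessProd α N lS w‖ * ‖_‖ ≤ (1 + α * L) ^ N * (1 + α * L) := by
          exact mul_le_mul ih h2 (norm_nonneg _) (by positivity)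
      _ = (1 + α * L) ^ (N+1) := by ring

end Helpers

section Helpers2
variable {d : ℕ} {α L ρ : ℝ} {lS lT : EuclideanSpace ℝ (Fin d) → ℝ}

lemma hessProd_diff_le (hα : 0 < α) (hL : 0 < L) (hρ : 0 < ρ)
    (hgradS : ∀ w u, ‖gradient lS w - gradient lS u‖ ≤ L * ‖w - u‖)
    (hhessS : ∀ w u, ‖fderiv ℝ (gradient lS) w - fderiv ℝ (gradient lS) u‖ ≤ ρ * ‖w - u‖)
    (w u : EuclideanSpace ℝ (Fin d)) :
    ∀ K, ‖hessProd α (K+1) lS w - hessProd α (K+1) lS u‖ ≤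
      (ρ / L) * (1 + α * L) ^ K * ((1 + α * L) ^ (K+1) - 1) * ‖w - u‖ := by
  have hM : (1:ℝ) ≤ 1 + α * L := by nlinarith
  have factor_diff : ∀ j, ‖(ContinuousLinearMap.id ℝ (EuclideanSpace ℝ (Fin d)) -
        α • fderiv ℝ (gradient lS) (innerPath α lS j w)) -
      (ContinuousLinearMap.id ℝ (EuclideanSpace ℝ (Fin d)) -
        α • fderiv ℝ (gradient lS) (innerPath α lS j u))‖ ≤
      α * ρ * ((1 + α * L) ^ j * ‖w - u‖) := by
    intro j
    have key : (ContinuousLinearMap.id ℝ (EuclideanSpace ℝ (Fin d)) -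
        α • fderiv ℝ (gradient lS) (innerPath α lS j w)) -
      (ContinuousLinearMap.id ℝ (EuclideanSpace ℝ (Fin d)) -
        α • fderiv ℝ (gradient lS) (innerPath α lS j u)) =
      -(α • (fderiv ℝ (gradient lS) (innerPath α lS j w) -
          fderiv ℝ (gradient lS) (innerPath α lS j u))) := by
      rw [smul_sub]; abel
    rw [key, norm_neg]
    refine (norm_smul_le α (fderiv ℝ (gradient lS) (innerPath α lS j w) -
      fderiv ℝ (gradient lS) (innerPath α lS j u))).trans ?_
    rw [Real.norm_eq_abs, abs_of_pos hα]
    have h1 := hhessS (innerPath α lS j w) (innerPath α lS j u)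
    have h2 := innerPath_lip hα hL.le hgradS w u j
    have h3 : ‖fderiv ℝ (gradient lS) (innerPath α lS j w) -
        fderiv ℝ (gradient lS) (innerPath α lS j u)‖ ≤ ρ * ((1 + α * L) ^ j * ‖w - u‖) := by
      refine h1.trans ?_
      exact mul_le_mul_of_nonneg_left h2 hρ.le
    calc α * ‖_‖ ≤ α * (ρ * ((1 + α * L) ^ j * ‖w - u‖)) :=
          mul_le_mul_of_nonneg_left h3 hα.le
      _ = α * ρ * ((1 + α * L) ^ j * ‖w - u‖) := by ring
  intro K
  induction K with
  | zero =>
    have h0 : ∀ v, hessProd α 1 lS v = (ContinuousLinearMap.id ℝ (EuclideanSpace ℝ (Fin d)) -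
        α • fderiv ℝ (gradient lS) (innerPath α lS 0 v)) := by
      intro v
      rw [hessProd_succ]
      have h1 : hessProd α 0 lS v = 1 := by simp [hessProd]
      rw [h1, one_mul]
    rw [h0 w, h0 u]
    refine (factor_diff 0).trans (le_of_eq ?_)
    field_simp
    ring
  | succ K ih =>
    rw [hessProd_succ α (K+1) lS w, hessProd_succ α (K+1) lS u]
    set Bw := ContinuousLinearMap.id ℝ (EuclideanSpace ℝ (Fin d)) -
        α • fderiv ℝ (gradient lS) (innerPath α lS (K+1) w) with hBw
    set Bu := ContinuousLinearMap.id ℝ (EuclideanSpace ℝ (Fin d)) -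
        α • fderiv ℝ (gradient lS) (innerPath α lS (K+1) u) with hBu'
    set Pw := hessProd α (K+1) lS w with hPw
    set Pu := hessProd α (K+1) lS u with hPu
    have decomp : ∀ a b c e : EuclideanSpace ℝ (Fin d) →L[ℝ] EuclideanSpace ℝ (Fin d),
        a * b - c * e = a * (b - e) + (a - c) * e := fun a b c e => by rw [mul_sub, sub_mul]; abel
    have decomp' := decomp Pw Bw Pu Bu
    rw [decomp']
    refine (norm_add_le _ _).trans ?_
    have t1 : ‖Pw * (Bw - Bu)‖ ≤
        (1 + α * L) ^ (K+1) * (α * ρ * ((1 + α * L) ^ (K+1) * ‖w - u‖)) := by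
      refine (norm_mul_le _ _).trans ?_
      refine mul_le_mul (hessProd_norm_le hα hL.le hgradS w (K+1)) ?_
        (norm_nonneg _) (by positivity)
      rw [hBw, hBu']
      exact factor_diff (K+1)
    have t2 : ‖(Pw - Pu) * Bu‖ ≤
        ((ρ / L) * (1 + α * L) ^ K * ((1 + α * L) ^ (K+1) - 1) * ‖w - u‖) * (1 + α * L) := by
      refine (norm_mul_le _ _).trans ?_
      have hBu2 : ‖Bu‖ ≤ 1 + α * L := factor_norm_le hα hL.le hgradS (innerPath α lS (K+1) u)
      refine mul_le_mul ih hBu2 (norm_nonneg _) ?_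
      have h1 : (1:ℝ) ≤ (1 + α * L) ^ (K+1) := one_le_pow₀ hM
      have h2 : (0:ℝ) ≤ (1 + α * L) ^ (K+1) - 1 := by linarith
      positivity
    refine (add_le_add t1 t2).trans (le_of_eq ?_)
    have hαρ : α * ρ = (ρ / L) * (α * L) := by field_simp
    rw [hαρ]
    ring
end Helpers2

section Helpers3
variable {d : ℕ} {α L ρ bi : ℝ} {lS lT : EuclideanSpace ℝ (Fin d) → ℝ}

lemma gT_path_le (hα : 0 < α) (hL : 0 < L)
    (hgradT : ∀ w u, ‖gradient lT w - gradient lT u‖ ≤ L * ‖w - u‖)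
    (hdiffb : ∀ v, ‖gradient lS v - gradient lT v‖ ≤ bi)
    (w : EuclideanSpace ℝ (Fin d)) :
    ∀ j, ‖gradient lT (innerPath α lS j w)‖ ≤
      (1 + α * L) ^ j * ‖gradient lT w‖ + ((1 + α * L) ^ j - 1) * bi := by
  have hb : 0 ≤ bi := le_trans (norm_nonneg _) (hdiffb w)
  intro j
  induction j with
  | zero => simp [innerPath]
  | succ j ih =>
    set p := innerPath α lS j w with hp
    have hstep : innerPath α lS (j+1) w - p = -(α • gradient lS p) := by
      simp [innerPath]
      rw [hp]; abel
    have h1 : ‖gradient lT (innerPath α lS (j+1) w)‖ ≤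
        ‖gradient lT p‖ + L * ‖innerPath α lS (j+1) w - p‖ := by
      have := hgradT (innerPath α lS (j+1) w) p
      have htri := norm_le_insert' (gradient lT (innerPath α lS (j+1) w)) (gradient lT p)
      calc ‖gradient lT (innerPath α lS (j+1) w)‖
          ≤ ‖gradient lT p‖ + ‖gradient lT (innerPath α lS (j+1) w) - gradient lT p‖ := by
            have := norm_sub_norm_le (gradient lT (innerPath α lS (j+1) w)) (gradient lT p)
            linarith [norm_sub_norm_le (gradient lT (innerPath α lS (j+1) w)) (gradient lT p)]
        _ ≤ ‖gradient lT p‖ + L * ‖innerPath α lS (j+1) w - p‖ := by linarith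
    have h2 : ‖innerPath α lS (j+1) w - p‖ ≤ α * (‖gradient lT p‖ + bi) := by
      rw [hstep, norm_neg]
      refine (norm_smul_le α (gradient lS p)).trans ?_
      rw [Real.norm_eq_abs, abs_of_pos hα]
      have : ‖gradient lS p‖ ≤ ‖gradient lT p‖ + bi := by
        have h3 := hdiffb p
        have h4 := norm_sub_norm_le (gradient lS p) (gradient lT p)
        linarith
      exact mul_le_mul_of_nonneg_left this hα.le
    have hMj : (1:ℝ) ≤ (1 + α * L) ^ j := one_le_pow₀ (by nlinarith)
    have hgp : (0:ℝ) ≤ ‖gradient lT p‖ := norm_nonneg _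
    have : ‖gradient lT (innerPath α lS (j+1) w)‖ ≤
        (1 + α * L) * ‖gradient lT p‖ + α * L * bi := by nlinarith
    refine this.trans ?_
    have hgw : (0:ℝ) ≤ ‖gradient lT w‖ := norm_nonneg _
    have hM1 : (0:ℝ) < 1 + α * L := by nlinarith
    calc (1 + α * L) * ‖gradient lT p‖ + α * L * bi
        ≤ (1 + α * L) * ((1 + α * L) ^ j * ‖gradient lT w‖ + ((1 + α * L) ^ j - 1) * bi)
          + α * L * bi := by nlinarith
      _ = (1 + α * L) ^ (j+1) * ‖gradient lT w‖ + ((1 + α * L) ^ (j+1) - 1) * bi := by ring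

set_option maxHeartbeats 1000000 in
lemma metaGrad_diff_le (hα : 0 < α) (hL : 0 < L) (hρ : 0 < ρ) (K : ℕ)
    (hgradS : ∀ w u, ‖gradient lS w - gradient lS u‖ ≤ L * ‖w - u‖)
    (hgradT : ∀ w u, ‖gradient lT w - gradient lT u‖ ≤ L * ‖w - u‖)
    (hhessS : ∀ w u, ‖fderiv ℝ (gradient lS) w - fderiv ℝ (gradient lS) u‖ ≤ ρ * ‖w - u‖)
    (hdiffb : ∀ v, ‖gradient lS v - gradient lT v‖ ≤ bi)
    (w u : EuclideanSpace ℝ (Fin d)) :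
    ‖metaGrad α (K+1) lS lT w - metaGrad α (K+1) lS lT u‖ ≤
      ((1 + α * L) ^ (2 * (K+1)) * L +
        ((α * ρ + (ρ / L) * (1 + α * L) ^ K) * (1 + α * L) ^ (2 * (K+1))) * bi +
        ((α * ρ + (ρ / L) * (1 + α * L) ^ K) * (1 + α * L) ^ (2 * (K+1))) *
          ‖gradient lT w‖) * ‖w - u‖ := by
  have hb : 0 ≤ bi := le_trans (norm_nonneg _) (hdiffb w)
  set N := K + 1 with hNdef
  set M := 1 + α * L with hM
  have hM1 : (1:ℝ) ≤ M := by rw [hM]; nlinarith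
  have hM0 : (0:ℝ) < M := by linarith
  set x := gradient lT (innerPath α lS N w) with hx
  set y := gradient lT (innerPath α lS N u) with hy
  set Pw := hessProd α N lS w with hPw
  set Pu := hessProd α N lS u with hPu
  have decomp : metaGrad α N lS lT w - metaGrad α N lS lT u =
      (Pw - Pu) x + Pu (x - y) := by
    simp only [metaGrad, ← hx, ← hy, ← hPw, ← hPu, ContinuousLinearMap.sub_apply, map_sub]
    abel
  rw [decomp]
  have hxb : ‖x‖ ≤ M ^ N * ‖gradient lT w‖ + (M ^ N - 1) * bi :=
    gT_path_le hα hL hgradT hdiffb w N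
  have hMN1 : (1:ℝ) ≤ M ^ N := one_le_pow₀ hM1
  have t1 : ‖(Pw - Pu) x‖ ≤
      ((ρ / L) * M ^ K * (M ^ N - 1) * ‖w - u‖) *
        (M ^ N * ‖gradient lT w‖ + (M ^ N - 1) * bi) := by
    refine (ContinuousLinearMap.le_opNorm _ _).trans ?_
    refine mul_le_mul (hessProd_diff_le hα hL hρ hgradS hhessS w u K) hxb (norm_nonneg _) ?_
    have hpk : (0:ℝ) ≤ M ^ K := by positivity
    have : (0:ℝ) ≤ M ^ N - 1 := by linarith
    positivity
  have t2 : ‖Pu (x - y)‖ ≤ M ^ N * (L * (M ^ N * ‖w - u‖)) := by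
    refine (ContinuousLinearMap.le_opNorm _ _).trans ?_
    refine mul_le_mul (hessProd_norm_le hα hL.le hgradS u N) ?_ (norm_nonneg _) (by positivity)
    refine (hgradT _ _).trans ?_
    exact mul_le_mul_of_nonneg_left (innerPath_lip hα hL.le hgradS w u N) hL.le
  refine (norm_add_le _ _).trans ((add_le_add t1 t2).trans ?_)
  have hpow : M ^ (2 * N) = M ^ N * M ^ N := by rw [two_mul, pow_add]
  have hD : (ρ / L) * M ^ K * (M ^ N - 1) * M ^ N ≤
      (α * ρ + (ρ / L) * M ^ K) * M ^ (2 * N) := by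
    rw [hpow]
    have h1 : (M ^ N - 1) * M ^ N ≤ M ^ N * M ^ N := by nlinarith
    have h2 : (0:ℝ) ≤ (ρ / L) * M ^ K := by positivity
    have h3 : (0:ℝ) ≤ α * ρ * (M ^ N * M ^ N) := by positivity
    nlinarith
  have hD2 : (ρ / L) * M ^ K * (M ^ N - 1) * (M ^ N - 1) ≤
      (α * ρ + (ρ / L) * M ^ K) * M ^ (2 * N) := by
    rw [hpow]
    have h1 : (M ^ N - 1) * (M ^ N - 1) ≤ M ^ N * M ^ N := by nlinarith
    have h2 : (0:ℝ) ≤ (ρ / L) * M ^ K := by positivity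
    have h3 : (0:ℝ) ≤ α * ρ * (M ^ N * M ^ N) := by positivity
    nlinarith
  have hgw : (0:ℝ) ≤ ‖gradient lT w‖ := norm_nonneg _
  have hwu : (0:ℝ) ≤ ‖w - u‖ := norm_nonneg _
  have e1 : M ^ N * (L * (M ^ N * ‖w - u‖)) = M ^ (2*N) * L * ‖w - u‖ := by
    rw [hpow]; ring
  rw [e1]
  nlinarith [mul_le_mul_of_nonneg_right hD (mul_nonneg hgw hwu),
    mul_le_mul_of_nonneg_right hD2 (mul_nonneg hb hwu)]

end Helpers3

theorem stmt14 {d : ℕ} (hd : 1 ≤ d) (α L ρ : ℝ) (hα : 0 < α) (hL : 0 < L) (hρ : 0 < ρ)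
    (N : ℕ) (hN : 1 ≤ N)
    {I : Type*} [MeasurableSpace I] (μ : Measure I) [IsProbabilityMeasure μ]
    (lS lT : I → EuclideanSpace ℝ (Fin d) → ℝ)
    (hlS : ∀ i, ContDiff ℝ 2 (lS i)) (hlT : ∀ i, ContDiff ℝ 2 (lT i))
    (hgradS : ∀ i, ∀ w u : EuclideanSpace ℝ (Fin d),
      ‖gradient (lS i) w - gradient (lS i) u‖ ≤ L * ‖w - u‖)
    (hgradT : ∀ i, ∀ w u : EuclideanSpace ℝ (Fin d),
      ‖gradient (lT i) w - gradient (lT i) u‖ ≤ L * ‖w - u‖)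
    (hhessS : ∀ i, ∀ w u : EuclideanSpace ℝ (Fin d),
      ‖fderiv ℝ (gradient (lS i)) w - fderiv ℝ (gradient (lS i)) u‖ ≤ ρ * ‖w - u‖)
    (hhessT : ∀ i, ∀ w u : EuclideanSpace ℝ (Fin d),
      ‖fderiv ℝ (gradient (lT i)) w - fderiv ℝ (gradient (lT i)) u‖ ≤ ρ * ‖w - u‖)
    (b : I → ℝ) (hbnn : ∀ i, 0 ≤ b i) (hbint : Integrable b μ)
    (hdiffb : ∀ i, ∀ v : EuclideanSpace ℝ (Fin d),
      ‖gradient (lS i) v - gradient (lT i) v‖ ≤ b i)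
    (hGint : ∀ w : EuclideanSpace ℝ (Fin d),
      Integrable (fun i => metaGrad α N (lS i) (lT i) w) μ)
    (hgTint : ∀ w : EuclideanSpace ℝ (Fin d),
      Integrable (fun i => ‖gradient (lT i) w‖) μ) :
    ∀ w u : EuclideanSpace ℝ (Fin d),
      ‖(∫ i, metaGrad α N (lS i) (lT i) w ∂μ) - ∫ i, metaGrad α N (lS i) (lT i) u ∂μ‖ ≤
        ((1 + α * L) ^ (2 * N) * L +
          ((α * ρ + (ρ / L) * (1 + α * L) ^ (N - 1)) * (1 + α * L) ^ (2 * N)) *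
            (∫ i, b i ∂μ) +
          ((α * ρ + (ρ / L) * (1 + α * L) ^ (N - 1)) * (1 + α * L) ^ (2 * N)) *
            ∫ i, ‖gradient (lT i) w‖ ∂μ) * ‖w - u‖ := by
  intro w u
  obtain ⟨K, rfl⟩ : ∃ K, N = K + 1 := ⟨N - 1, (Nat.succ_pred_eq_of_pos hN).symm⟩
  simp only [Nat.add_sub_cancel]
  set A := (1 + α * L) ^ (2 * (K+1)) * L with hA
  set C := (α * ρ + (ρ / L) * (1 + α * L) ^ K) * (1 + α * L) ^ (2 * (K+1)) with hC
  have hptwise : ∀ i, ‖metaGrad α (K+1) (lS i) (lT i) w - metaGrad α (K+1) (lS i) (lT i) u‖ ≤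
      (A + C * b i + C * ‖gradient (lT i) w‖) * ‖w - u‖ := by
    intro i
    have := metaGrad_diff_le hα hL hρ K (hgradS i) (hgradT i) (hhessS i) (hdiffb i) w u
    rw [hA, hC]
    calc ‖metaGrad α (K+1) (lS i) (lT i) w - metaGrad α (K+1) (lS i) (lT i) u‖
        ≤ _ := this
      _ = _ := by ring
  rw [← integral_sub (hGint w) (hGint u)]
  refine (norm_integral_le_integral_norm _).trans ?_
  have hint1 : Integrable
      (fun i => ‖metaGrad α (K+1) (lS i) (lT i) w - metaGrad α (K+1) (lS i) (lT i) u‖) μ :=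
    ((hGint w).sub (hGint u)).norm
  have hint2a : Integrable (fun i => A + C * b i) μ :=
    (integrable_const A).add (hbint.const_mul C)
  have hint2b : Integrable (fun i => A + C * b i + C * ‖gradient (lT i) w‖) μ :=
    hint2a.add ((hgTint w).const_mul C)
  have hint2 : Integrable
      (fun i => (A + C * b i + C * ‖gradient (lT i) w‖) * ‖w - u‖) μ :=
    hint2b.mul_const _
  refine (integral_mono hint1 hint2 hptwise).trans ?_
  rw [integral_mul_const]
  have hkey : ∫ i, (A + C * b i + C * ‖gradient (lT i) w‖) ∂μ =
      A + C * (∫ i, b i ∂μ) + C * ∫ i, ‖gradient (lT i) w‖ ∂μ := by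
    rw [integral_add hint2a ((hgTint w).const_mul C), integral_add (integrable_const A)
      (hbint.const_mul C), integral_const, integral_const_mul, integral_const_mul]
    simp [measure_univ]
  rw [hkey]
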